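/- Every finite simple graph without isolated vertices in which every vertex has degree at most Δ has a matching M with (Δ + 1)·|M| ≥ |V|. -/

import Mathlib

open Finset

/-- Every finite simple graph without isolated vertices and with maximum degree
at most `Δ ≥ 1` has a matching `M` with `(Δ + 1) * |M| ≥ |V|`. -/
theorem large_matching_exists {V : Type*} [Fintype V] [DecidableEq V]
    (G : SimpleGraph V) [DecidableRel G.Adj]
    (Δ : ℕ) (hΔ : 1 ≤ Δ) (hiso : ∀ v : V, ∃ u, G.Adj v u)
    (hdeg : ∀ v : V, G.degree v ≤ Δ) :
    ∃ M : Finset (Sym2 V),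
      (∀ e ∈ M, e ∈ G.edgeSet) ∧
      ((M : Set (Sym2 V)).Pairwise fun e f => ∀ v : V, v ∈ e → v ∉ f) ∧
      Fintype.card V ≤ (Δ + 1) * M.card := by
  classical
  set R : Sym2 V → Sym2 V → Prop := fun e f => ∀ v : V, v ∈ e → v ∉ f with hR
  have hsymm : Symmetric R := by
    intro e f h v hvf hve
    exact h v hve hvf
  haveI : Std.Symm R := ⟨fun a b h => hsymm h⟩
  set P : Finset (Sym2 V) → Prop := fun M =>
    (∀ e ∈ M, e ∈ G.edgeSet) ∧ ((M : Set (Sym2 V)).Pairwise R) with hPdef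
  have hPempty : P ∅ := ⟨by simp, by simp⟩
  obtain ⟨M, hMmem, hMmax'⟩ := Finset.exists_max_image
    (G.edgeFinset.powerset.filter P) Finset.card
    ⟨∅, Finset.mem_filter.2 ⟨Finset.empty_mem_powerset _, hPempty⟩⟩
  have hMP : P M := (Finset.mem_filter.1 hMmem).2
  have hMe : ∀ e ∈ M, e ∈ G.edgeSet := hMP.1
  have hMd : (M : Set (Sym2 V)).Pairwise R := hMP.2
  have hMmax : ∀ M', P M' → M'.card ≤ M.card := by
    intro M' hM'
    refine hMmax' M' (Finset.mem_filter.2 ⟨Finset.mem_powerset.2 ?_, hM'⟩)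
    intro e he
    exact SimpleGraph.mem_edgeFinset.2 (hM'.1 e he)
  -- covered vertices
  set S : Finset V := Finset.univ.filter (fun v => ∃ e ∈ M, v ∈ e) with hS
  have hmemS : ∀ v : V, v ∈ S ↔ ∃ e ∈ M, v ∈ e := by
    intro v; simp [hS]
  have hmemSc : ∀ v : V, v ∈ Sᶜ ↔ ∀ e ∈ M, v ∉ e := by
    intro v; simp [hS]
  -- independence of uncovered vertices
  have hind : ∀ u w : V, u ∈ Sᶜ → w ∈ Sᶜ → ¬ G.Adj u w := by
    intro u w hu hw hadj
    have hnotmem : s(u, w) ∉ M := fun h => (hmemSc u).1 hu _ h (by simp)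
    have hP' : P (insert s(u, w) M) := by
      constructor
      · intro e he
        rcases Finset.mem_insert.1 he with rfl | he
        · exact hadj
        · exact hMe e he
      · rw [Finset.coe_insert]
        refine Set.pairwise_insert_of_symm.2 ⟨hMd, ?_⟩
        intro f hf _ v hv
        rcases Sym2.mem_iff.1 hv with rfl | rfl
        · exact (hmemSc v).1 hu f hf
        · exact (hmemSc v).1 hw f hf
    have := hMmax _ hP'
    rw [Finset.card_insert_of_notMem hnotmem] at this
    omega
  -- choice of neighbour
  obtain ⟨m, hm⟩ : ∃ m : V → V, ∀ u, G.Adj u (m u) :=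
    ⟨fun u => (hiso u).choose, fun u => (hiso u).choose_spec⟩
  have hmS : ∀ u ∈ Sᶜ, m u ∈ S := by
    intro u hu
    by_contra h
    exact hind u (m u) hu (by simpa using h) (hm u)
  -- fiber bound
  have honeside : ∀ a b : V, G.Adj a b → b ∈ S →
      (Sᶜ.filter (fun u => m u = a)).card ≤ Δ - 1 := by
    intro a b hab hb
    have hsub : Sᶜ.filter (fun u => m u = a) ⊆ (G.neighborFinset a).erase b := by
      intro u hu
      obtain ⟨hu1, hu2⟩ := Finset.mem_filter.1 hu
      refine Finset.mem_erase.2 ⟨?_, ?_⟩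
      · rintro rfl; exact (Finset.mem_compl.1 hu1) hb
      · have := hm u; rw [hu2] at this
        exact (G.mem_neighborFinset a u).2 this.symm
    calc (Sᶜ.filter (fun u => m u = a)).card
        ≤ ((G.neighborFinset a).erase b).card := Finset.card_le_card hsub
      _ = G.degree a - 1 := by
          rw [Finset.card_erase_of_mem ((G.mem_neighborFinset a b).2 hab),
            G.card_neighborFinset_eq_degree]
      _ ≤ Δ - 1 := Nat.sub_le_sub_right (hdeg a) 1
  have hfib : ∀ e ∈ M, (Sᶜ.filter (fun u => m u ∈ e)).card ≤ Δ - 1 := by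
    intro e he
    induction e using Sym2.ind with
    | _ a b =>
      have hab : G.Adj a b := G.mem_edgeSet.1 (hMe _ he)
      have haS : a ∈ S := (hmemS a).2 ⟨_, he, by simp⟩
      have hbS : b ∈ S := (hmemS b).2 ⟨_, he, by simp⟩
      have hsplit : Sᶜ.filter (fun u => m u ∈ s(a, b)) =
          Sᶜ.filter (fun u => m u = a) ∪ Sᶜ.filter (fun u => m u = b) := by
        rw [← Finset.filter_or]
        apply Finset.filter_congr
        intro u _; simp [Sym2.mem_iff]
      -- at most one side is nonempty
      by_cases hFb : (Sᶜ.filter (fun u => m u = b)).Nonempty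
      · by_cases hFa : (Sᶜ.filter (fun u => m u = a)).Nonempty
        · -- augmenting swap: contradiction
          exfalso
          obtain ⟨u, hu⟩ := hFa
          obtain ⟨w, hw⟩ := hFb
          obtain ⟨huc, hua⟩ := Finset.mem_filter.1 hu
          obtain ⟨hwc, hwb⟩ := Finset.mem_filter.1 hw
          have huw : u ≠ w := by
            rintro rfl
            exact hab.ne (hua ▸ hwb ▸ rfl)
          have hub : u ≠ b := by rintro rfl; exact (Finset.mem_compl.1 huc) hbS
          have haw : a ≠ w := by rintro rfl; exact (Finset.mem_compl.1 hwc) haS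
          have hua' : G.Adj u a := by have := hm u; rwa [hua] at this
          have hwb' : G.Adj b w := by
            have := hm w; rw [hwb] at this; exact this.symm
          set M₀ : Finset (Sym2 V) := M.erase s(a, b) with hM₀
          set M' : Finset (Sym2 V) := insert s(u, a) (insert s(b, w) M₀) with hM'
          have hbw_not : s(b, w) ∉ M₀ := by
            intro h
            exact (hmemSc w).1 hwc _ (Finset.mem_of_mem_erase h) (by simp)
          have hua_not : s(u, a) ∉ insert s(b, w) M₀ := by
            intro h
            rcases Finset.mem_insert.1 h with h | h
            · have : u ∈ s(b, w) := h ▸ (by simp : u ∈ s(u, a))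
              rcases Sym2.mem_iff.1 this with h' | h'
              · exact hub h'
              · exact huw h'
            · exact (hmemSc u).1 huc _ (Finset.mem_of_mem_erase h) (by simp)
          have hcard : M'.card = M.card + 1 := by
            have h1 : M₀.card = M.card - 1 := Finset.card_erase_of_mem he
            have hMpos : 1 ≤ M.card := Finset.card_pos.2 ⟨_, he⟩
            rw [hM', Finset.card_insert_of_notMem hua_not,
              Finset.card_insert_of_notMem hbw_not, h1]
            omega
          have hP' : P M' := by
            constructor
            · intro f hf
              rcases Finset.mem_insert.1 hf with rfl | hf
              · exact hua'
              rcases Finset.mem_insert.1 hf with rfl | hf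
              · exact hwb'
              · exact hMe _ (Finset.mem_of_mem_erase hf)
            · have hM₀d : (M₀ : Set (Sym2 V)).Pairwise R :=
                hMd.mono (by rw [hM₀, Finset.coe_erase]; exact Set.diff_subset)
            -- pairwise on M'
              rw [hM', Finset.coe_insert, Finset.coe_insert]
              refine Set.pairwise_insert_of_symm.2 ⟨?_, ?_⟩
              · refine Set.pairwise_insert_of_symm.2 ⟨hM₀d, ?_⟩
                intro f hf hne v hv
                have hf' : f ∈ M := Finset.mem_of_mem_erase (by exact_mod_cast hf)
                have hfne : s(a, b) ≠ f := by
                  intro h; exact (Finset.mem_erase.1 (by exact_mod_cast hf)).1 h.symm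
                rcases Sym2.mem_iff.1 hv with rfl | rfl
                · exact hMd he hf' hfne v (by simp)
                · exact (hmemSc v).1 hwc _ hf'
              · intro f hf hne v hv
                rcases Sym2.mem_iff.1 hv with rfl | hva
                · -- v = u : uncovered, and not in s(b,w)
                  rcases hf with rfl | hf
                  · intro h
                    rcases Sym2.mem_iff.1 h with h' | h'
                    · exact hub h'
                    · exact huw h'
                  · exact (hmemSc v).1 huc _ (Finset.mem_of_mem_erase (by exact_mod_cast hf))
                · -- v = a
                  subst hva
                  rcases hf with rfl | hf
                  · intro h
                    rcases Sym2.mem_iff.1 h with h' | h'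
                    · exact hab.ne h'
                    · exact haw h'
                  · have hf' : f ∈ M := Finset.mem_of_mem_erase (by exact_mod_cast hf)
                    have hfne : s(v, b) ≠ f := by
                      intro h; exact (Finset.mem_erase.1 (by exact_mod_cast hf)).1 h.symm
                    exact hMd he hf' hfne v (by simp)
          have := hMmax _ hP'
          omega
        · rw [hsplit, Finset.not_nonempty_iff_eq_empty.1 hFa, Finset.empty_union]
          exact honeside b a hab.symm haS
      · rw [hsplit, Finset.not_nonempty_iff_eq_empty.1 hFb, Finset.union_empty]
        exact honeside a b hab hbS
  -- count uncovered vertices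
  have hScc : Sᶜ.card ≤ (Δ - 1) * M.card := by
    have hsub : Sᶜ ⊆ M.biUnion (fun e => Sᶜ.filter (fun u => m u ∈ e)) := by
      intro u hu
      obtain ⟨e, he, hme⟩ := (hmemS (m u)).1 (hmS u hu)
      exact Finset.mem_biUnion.2 ⟨e, he, Finset.mem_filter.2 ⟨hu, hme⟩⟩
    calc Sᶜ.card ≤ (M.biUnion (fun e => Sᶜ.filter (fun u => m u ∈ e))).card :=
          Finset.card_le_card hsub
      _ ≤ ∑ e ∈ M, (Sᶜ.filter (fun u => m u ∈ e)).card := Finset.card_biUnion_le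
      _ ≤ ∑ _e ∈ M, (Δ - 1) := Finset.sum_le_sum hfib
      _ = (Δ - 1) * M.card := by rw [Finset.sum_const, smul_eq_mul, mul_comm]
  -- count covered vertices
  have hcard2 : ∀ e : Sym2 V, (Finset.univ.filter (· ∈ e)).card ≤ 2 := by
    intro e
    induction e using Sym2.ind with
    | _ a b =>
      have hsub2 : Finset.univ.filter (· ∈ s(a, b)) ⊆ {a, b} := by
        intro v hv
        have := (Finset.mem_filter.1 hv).2
        simpa [Finset.mem_insert] using Sym2.mem_iff.1 this
      calc (Finset.univ.filter (· ∈ s(a, b))).card ≤ ({a, b} : Finset V).card :=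
            Finset.card_le_card hsub2
        _ ≤ 2 := Finset.card_insert_le _ _ |>.trans (by simp)
  have hSc : S.card ≤ 2 * M.card := by
    have hsub : S ⊆ M.biUnion (fun e => Finset.univ.filter (· ∈ e)) := by
      intro v hv
      obtain ⟨e, he, hve⟩ := (hmemS v).1 hv
      exact Finset.mem_biUnion.2 ⟨e, he, by simp [hve]⟩
    calc S.card ≤ (M.biUnion (fun e => Finset.univ.filter (· ∈ e))).card :=
          Finset.card_le_card hsub
      _ ≤ ∑ e ∈ M, (Finset.univ.filter (· ∈ e)).card := Finset.card_biUnion_le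
      _ ≤ ∑ _e ∈ M, 2 := Finset.sum_le_sum (fun e _ => hcard2 e)
      _ = 2 * M.card := by rw [Finset.sum_const, smul_eq_mul, mul_comm]
  refine ⟨M, hMe, hMd, ?_⟩
  have hcardV : Fintype.card V = S.card + Sᶜ.card := (Finset.card_add_card_compl S).symm
  have : (Δ + 1) * M.card = 2 * M.card + (Δ - 1) * M.card := by
    have h2 : Δ + 1 = 2 + (Δ - 1) := by omega
    rw [h2, Nat.add_mul]
  omega
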